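/- Let Ω ⊂ ℝⁿ be a bounded strictly convex domain with smooth boundary and φ ∈ C²(Ω̄) with φ > 0 in Ω, φ = 0 on ∂Ω, and ∂φ/∂ν < 0 on ∂Ω (ν the outward unit normal). Let f = -log φ. Then there exist positive constants δ₀ and c₀ such that for every x ∈ Ω with φ(x) < δ₀ and every X ∈ ℝⁿ, the Hessian satisfies ∇²f(x)(X,X) ≥ c₀‖X‖²/φ(x). -/

import Mathlib

open Filter Topology Set

private lemma hess_scale {E : Type*} [NormedAddCommGroup E] [NormedSpace ℝ E]
    (T : ContinuousMultilinearMap ℝ (fun _ : Fin 2 => E) ℝ) (r : ℝ) (u : E) :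
    T ![r • u, r • u] = r ^ 2 * T ![u, u] := by
  have h : ![r • u, r • u] = fun i => r • (![u, u] i) := by
    ext i; fin_cases i <;> simp
  rw [h, T.map_smul_univ]
  simp [pow_two]

private lemma hess_neg_log {E : Type*} [NormedAddCommGroup E] [NormedSpace ℝ E]
    {Ω : Set E} (hopen : IsOpen Ω) {φ : E → ℝ}
    (hφC2 : ContDiffOn ℝ 2 φ (closure Ω))
    (hφpos : ∀ x ∈ Ω, 0 < φ x) {x : E} (hx : x ∈ Ω) (X : E) :
    iteratedFDeriv ℝ 2 (fun z => -Real.log (φ z)) x ![X, X]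
      = ((φ x) ^ 2)⁻¹ * (fderiv ℝ φ x X) ^ 2
        - (φ x)⁻¹ * iteratedFDeriv ℝ 2 φ x ![X, X] := by
  have hnhd : ∀ y ∈ Ω, closure Ω ∈ 𝓝 y := fun y hy =>
    Filter.mem_of_superset (hopen.mem_nhds hy) subset_closure
  have hCA : ∀ y ∈ Ω, ContDiffAt ℝ 2 φ y := fun y hy => hφC2.contDiffAt (hnhd y hy)
  have hφd : ∀ y ∈ Ω, HasFDerivAt φ (fderiv ℝ φ y) y := fun y hy =>
    ((hCA y hy).differentiableAt (by norm_num)).hasFDerivAt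
  set F : E → (E →L[ℝ] ℝ) := fun y => (-(φ y)⁻¹) • fderiv ℝ φ y with hF
  have hlog : ∀ y ∈ Ω, HasFDerivAt (fun z => -Real.log (φ z)) (F y) y := by
    intro y hy
    have h1 : HasDerivAt Real.log (φ y)⁻¹ (φ y) :=
      Real.hasDerivAt_log (ne_of_gt (hφpos y hy))
    have h2 := (h1.comp_hasFDerivAt y (hφd y hy)).neg
    exact h2.congr_fderiv (by simp [hF, neg_smul])
  have hfEq : Set.EqOn (fderiv ℝ (fun z => -Real.log (φ z))) F Ω := fun y hy =>
    (hlog y hy).fderiv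
  have hev : fderiv ℝ (fun z => -Real.log (φ z)) =ᶠ[𝓝 x] F :=
    Filter.eventuallyEq_of_mem (hopen.mem_nhds hx) hfEq
  have hφne : φ x ≠ 0 := ne_of_gt (hφpos x hx)
  have hc : HasFDerivAt (fun y => -(φ y)⁻¹) ((((φ x) ^ 2)⁻¹) • fderiv ℝ φ x) x := by
    have h1 : HasDerivAt (fun t : ℝ => -t⁻¹) (((φ x) ^ 2)⁻¹) (φ x) := by
      exact (hasDerivAt_inv hφne).neg.congr_deriv (by simp)
    exact h1.comp_hasFDerivAt x (hφd x hx)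
  have hL : HasFDerivAt (fderiv ℝ φ) (fderiv ℝ (fderiv ℝ φ) x) x := by
    have : ContDiffAt ℝ 1 (fderiv ℝ φ) x := (hCA x hx).fderiv_right (by norm_num)
    exact (this.differentiableAt (by norm_num)).hasFDerivAt
  have hFd : HasFDerivAt F
      ((-(φ x)⁻¹) • fderiv ℝ (fderiv ℝ φ) x +
        ((((φ x) ^ 2)⁻¹) • fderiv ℝ φ x).smulRight (fderiv ℝ φ x)) x := hc.smul hL
  have key : fderiv ℝ (fderiv ℝ (fun z => -Real.log (φ z))) x
      = (-(φ x)⁻¹) • fderiv ℝ (fderiv ℝ φ) x +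
        ((((φ x) ^ 2)⁻¹) • fderiv ℝ φ x).smulRight (fderiv ℝ φ x) := by
    rw [hev.fderiv_eq]; exact hFd.fderiv
  rw [iteratedFDeriv_two_apply, iteratedFDeriv_two_apply, key]
  simp [ContinuousLinearMap.smulRight_apply, ContinuousLinearMap.smul_apply, smul_eq_mul]
  ring

theorem stmt10 {n : ℕ} (Ω : Set (EuclideanSpace ℝ (Fin n)))
    (hopen : IsOpen Ω) (hbd : Bornology.IsBounded Ω) (hconv : Convex ℝ Ω)
    (φ : EuclideanSpace ℝ (Fin n) → ℝ)
    (hφC2 : ContDiffOn ℝ 2 φ (closure Ω))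
    (hφpos : ∀ x ∈ Ω, 0 < φ x)
    (hφ0 : ∀ x ∈ frontier Ω, φ x = 0)
    (hφν : ∀ x ∈ frontier Ω, fderiv ℝ φ x ≠ 0)
    (hstrict : ∀ x ∈ frontier Ω, ∀ X : EuclideanSpace ℝ (Fin n), X ≠ 0 →
      fderiv ℝ φ x X = 0 → iteratedFDeriv ℝ 2 φ x ![X, X] < 0) :
    ∃ δ₀ > (0:ℝ), ∃ c₀ > (0:ℝ), ∀ x ∈ Ω, φ x < δ₀ →
      ∀ X : EuclideanSpace ℝ (Fin n),
        iteratedFDeriv ℝ 2 (fun z => -Real.log (φ z)) x ![X, X] ≥ c₀ * ‖X‖ ^ 2 / φ x := by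
  classical
  rcases Set.eq_empty_or_nonempty Ω with hΩe | hΩne
  · exact ⟨1, one_pos, 1, one_pos, fun x hx => by simp [hΩe] at hx⟩
  set s := closure Ω with hs
  have hΩsub : Ω ⊆ interior s := interior_maximal subset_closure hopen
  have hU : UniqueDiffOn ℝ s := uniqueDiffOn_convex hconv.closure (hΩne.mono hΩsub)
  have hnhd : ∀ y ∈ Ω, s ∈ 𝓝 y := fun y hy =>
    Filter.mem_of_superset (hopen.mem_nhds hy) subset_closure
  have hgEqInt : ∀ y ∈ Ω, fderivWithin ℝ φ s y = fderiv ℝ φ y := fun y hy =>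
    fderivWithin_of_mem_nhds (hnhd y hy)
  have hfr : frontier Ω = s \ Ω := hopen.frontier_eq
  have hdiffFr : ∀ y ∈ frontier Ω, DifferentiableAt ℝ φ y := by
    intro y hy
    by_contra h
    exact hφν y hy (fderiv_zero_of_not_differentiableAt h)
  have hgEq : ∀ y ∈ s, fderivWithin ℝ φ s y = fderiv ℝ φ y := by
    intro y hy
    by_cases hyΩ : y ∈ Ω
    · exact hgEqInt y hyΩ
    · exact (hdiffFr y (hfr ▸ ⟨hy, hyΩ⟩)).fderivWithin (hU y hy)
  have hHEqInt : ∀ y ∈ Ω, iteratedFDerivWithin ℝ 2 φ s y = iteratedFDeriv ℝ 2 φ y := by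
    intro y hy
    rw [iteratedFDerivWithin_congr_set (Filter.eventuallyEq_univ.2 (hnhd y hy)),
      iteratedFDerivWithin_univ]
  have hgcont : ContinuousOn (fun y => fderivWithin ℝ φ s y) s :=
    hφC2.continuousOn_fderivWithin hU (by norm_num)
  have hHcont : ContinuousOn (iteratedFDerivWithin ℝ 2 φ s) s :=
    hφC2.continuousOn_iteratedFDerivWithin (le_refl _) hU
  have hscomp : IsCompact s := hbd.isCompact_closure
  obtain ⟨M, hM⟩ := hscomp.exists_bound_of_continuousOn hHcont
  have hMX : ∀ y ∈ s, ∀ X : EuclideanSpace ℝ (Fin n), ‖X‖ = 1 →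
      iteratedFDerivWithin ℝ 2 φ s y ![X, X] ≤ M := by
    intro y hy X hX
    have h1 := (iteratedFDerivWithin ℝ 2 φ s y).le_opNorm ![X, X]
    have h2 : (∏ i, ‖(![X, X] : Fin 2 → _) i‖) = 1 := by
      simp [Fin.prod_univ_two, hX]
    rw [h2, mul_one] at h1
    calc iteratedFDerivWithin ℝ 2 φ s y ![X, X]
        ≤ ‖iteratedFDerivWithin ℝ 2 φ s y ![X, X]‖ := le_abs_self _
      _ ≤ ‖iteratedFDerivWithin ℝ 2 φ s y‖ := h1
      _ ≤ M := hM y hy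
  -- bridging at frontier
  have hfrH : ∀ y ∈ frontier Ω, ∀ X : EuclideanSpace ℝ (Fin n), X ≠ 0 →
      fderiv ℝ φ y X = 0 → ¬ (0 ≤ iteratedFDerivWithin ℝ 2 φ s y ![X, X]) := by
    intro y hyf X hX h0 hge
    have hys : y ∈ s := (hfr ▸ hyf).1
    have hlt := hstrict y hyf X hX h0
    by_cases hd : DifferentiableAt ℝ (fderiv ℝ φ) y
    · have heq : iteratedFDerivWithin ℝ 2 φ s y ![X, X] = iteratedFDeriv ℝ 2 φ y ![X, X] := by
        rw [iteratedFDerivWithin_two_apply φ hU hys, iteratedFDeriv_two_apply,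
          fderivWithin_congr' hgEq hys, hd.fderivWithin (hU y hys)]
      rw [heq] at hge
      exact absurd hlt (not_lt.2 hge)
    · rw [iteratedFDeriv_two_apply, fderiv_zero_of_not_differentiableAt hd] at hlt
      simp at hlt
  -- key uniform estimate near the boundary
  have key : ∃ δ₀ > (0:ℝ), ∃ c₀ > (0:ℝ), ∀ x ∈ Ω, φ x < δ₀ →
      ∀ X : EuclideanSpace ℝ (Fin n), ‖X‖ = 1 →
        c₀ ≤ (fderiv ℝ φ x X) ^ 2 / φ x - iteratedFDeriv ℝ 2 φ x ![X, X] := by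
    by_contra hcon
    push_neg at hcon
    have hseq : ∀ k : ℕ, ∃ x, x ∈ Ω ∧ φ x < 1 / (k + 1) ∧ ∃ X, ‖X‖ = 1 ∧
        (fderiv ℝ φ x X) ^ 2 / φ x - iteratedFDeriv ℝ 2 φ x ![X, X] < 1 / (k + 1) := by
      intro k
      have hpos : (0:ℝ) < 1 / (k + 1) := by positivity
      obtain ⟨x, hx1, hx2, X, hX1, hX2⟩ := hcon (1 / (k + 1)) hpos (1 / (k + 1)) hpos
      exact ⟨x, hx1, hx2, X, hX1, hX2⟩
    choose x hxΩ hxφ X hXn hQ using hseq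
    have hK : IsCompact (s ×ˢ Metric.sphere (0 : EuclideanSpace ℝ (Fin n)) 1) :=
      hscomp.prod (isCompact_sphere _ _)
    obtain ⟨⟨xb, Xb⟩, hmemK, ψ, hψm, hψt⟩ := hK.tendsto_subseq
      (x := fun k => (x k, X k))
      (fun k => ⟨subset_closure (hxΩ k), by
        simpa [mem_sphere_zero_iff_norm] using hXn k⟩)
    have hlim1 : Tendsto (fun k => x (ψ k)) atTop (𝓝 xb) :=
      (continuous_fst.tendsto _).comp hψt
    have hlim2 : Tendsto (fun k => X (ψ k)) atTop (𝓝 Xb) :=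
      (continuous_snd.tendsto _).comp hψt
    have hxbs : xb ∈ s := hmemK.1
    have hXbn : ‖Xb‖ = 1 := mem_sphere_zero_iff_norm.1 hmemK.2
    have hψ0 : Tendsto (fun k => 1 / ((ψ k : ℝ) + 1)) atTop (𝓝 0) :=
      tendsto_one_div_add_atTop_nhds_zero_nat.comp hψm.tendsto_atTop
    have htw : Tendsto (fun k => x (ψ k)) atTop (𝓝[s] xb) :=
      tendsto_nhdsWithin_of_tendsto_nhds_of_eventually_within _ hlim1
        (Filter.Eventually.of_forall fun k => subset_closure (hxΩ _))
    have hφlim : Tendsto (fun k => φ (x (ψ k))) atTop (𝓝 (φ xb)) :=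
      Filter.Tendsto.comp (hφC2.continuousOn xb hxbs) htw
    have hφxb : φ xb = 0 := by
      have h0 : Tendsto (fun k => φ (x (ψ k))) atTop (𝓝 0) := by
        refine squeeze_zero (fun k => le_of_lt (hφpos _ (hxΩ _)))
          (fun k => le_of_lt (hxφ (ψ k))) hψ0
      exact tendsto_nhds_unique hφlim h0
    have hxbf : xb ∈ frontier Ω := by
      rw [hfr]
      exact ⟨hxbs, fun hmem => (hφpos xb hmem).ne' hφxb⟩
    have hQ' : ∀ k, (fderivWithin ℝ φ s (x (ψ k)) (X (ψ k))) ^ 2 / φ (x (ψ k))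
        - iteratedFDerivWithin ℝ 2 φ s (x (ψ k)) ![X (ψ k), X (ψ k)]
          < 1 / ((ψ k : ℝ) + 1) := by
      intro k
      rw [hgEqInt _ (hxΩ _), hHEqInt _ (hxΩ _)]
      exact hQ (ψ k)
    have hXX : Tendsto (fun k => (![X (ψ k), X (ψ k)] : Fin 2 → EuclideanSpace ℝ (Fin n)))
        atTop (𝓝 ![Xb, Xb]) := by
      rw [tendsto_pi_nhds]
      intro i
      fin_cases i <;> simpa using hlim2
    have hHev : Tendsto (fun k => iteratedFDerivWithin ℝ 2 φ s (x (ψ k)) ![X (ψ k), X (ψ k)])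
        atTop (𝓝 (iteratedFDerivWithin ℝ 2 φ s xb ![Xb, Xb])) :=
      Filter.Tendsto.eval (Filter.Tendsto.comp (hHcont xb hxbs) htw) hXX
    have hgev : Tendsto (fun k => fderivWithin ℝ φ s (x (ψ k)) (X (ψ k)))
        atTop (𝓝 (fderivWithin ℝ φ s xb Xb)) := by
      have hA : Tendsto (fun k => fderivWithin ℝ φ s (x (ψ k))) atTop
          (𝓝 (fderivWithin ℝ φ s xb)) := Filter.Tendsto.comp (hgcont xb hxbs) htw
      exact (isBoundedBilinearMap_apply.continuous.tendsto _).comp (hA.prodMk_nhds hlim2)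
    have hg0 : fderivWithin ℝ φ s xb Xb = 0 := by
      have hb : ∀ k, (fderivWithin ℝ φ s (x (ψ k)) (X (ψ k))) ^ 2
          ≤ φ (x (ψ k)) * (1 + M) := by
        intro k
        have hp := hφpos _ (hxΩ (ψ k))
        have h1 := hQ' k
        have h2 : iteratedFDerivWithin ℝ 2 φ s (x (ψ k)) ![X (ψ k), X (ψ k)] ≤ M :=
          hMX _ (subset_closure (hxΩ _)) _ (hXn _)
        have h3 : 1 / ((ψ k : ℝ) + 1) ≤ 1 := by
          rw [div_le_one (by positivity)]
          linarith [(Nat.cast_nonneg (ψ k) : (0:ℝ) ≤ (ψ k : ℝ))]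
        have h4 : (fderivWithin ℝ φ s (x (ψ k)) (X (ψ k))) ^ 2 / φ (x (ψ k)) < 1 + M := by
          linarith
        rw [div_lt_iff₀ hp] at h4
        nlinarith
      have hbl : Tendsto (fun k => φ (x (ψ k)) * (1 + M)) atTop (𝓝 0) := by
        have h := hφlim
        rw [hφxb] at h
        simpa using h.mul_const (1 + M)
      have hsq : Tendsto (fun k => (fderivWithin ℝ φ s (x (ψ k)) (X (ψ k))) ^ 2)
          atTop (𝓝 ((fderivWithin ℝ φ s xb Xb) ^ 2)) := by
        simpa [pow_two] using hgev.mul hgev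
      have h0 : (fderivWithin ℝ φ s xb Xb) ^ 2 ≤ 0 :=
        le_of_tendsto_of_tendsto' hsq hbl hb
      have h1 : (fderivWithin ℝ φ s xb Xb) ^ 2 = 0 := le_antisymm h0 (sq_nonneg _)
      exact (pow_eq_zero_iff (two_ne_zero)).mp h1
    have hH0 : 0 ≤ iteratedFDerivWithin ℝ 2 φ s xb ![Xb, Xb] := by
      have hlow : ∀ k, -(1 / ((ψ k : ℝ) + 1))
          ≤ iteratedFDerivWithin ℝ 2 φ s (x (ψ k)) ![X (ψ k), X (ψ k)] := by
        intro k
        have h1 := hQ' k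
        have h2 : 0 ≤ (fderivWithin ℝ φ s (x (ψ k)) (X (ψ k))) ^ 2 / φ (x (ψ k)) :=
          div_nonneg (sq_nonneg _) (le_of_lt (hφpos _ (hxΩ _)))
        linarith
      have h := le_of_tendsto_of_tendsto' hψ0.neg hHev hlow
      simpa using h
    have hXb0 : Xb ≠ 0 := by
      intro h
      rw [h] at hXbn
      simp at hXbn
    have hgfull : fderiv ℝ φ xb Xb = 0 := by
      rw [← hgEq xb hxbs]; exact hg0
    exact hfrH xb hxbf Xb hXb0 hgfull hH0
  -- assemble the final statement
  obtain ⟨δ₀, hδ₀, c₀, hc₀, hkey⟩ := key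
  refine ⟨δ₀, hδ₀, c₀, hc₀, fun x hx hφx X => ?_⟩
  have hp := hφpos x hx
  rcases eq_or_ne X 0 with rfl | hX0
  · have h1 : iteratedFDeriv ℝ 2 (fun z => -Real.log (φ z)) x
        ![(0 : EuclideanSpace ℝ (Fin n)), 0] = 0 := by
      have h : (![(0 : EuclideanSpace ℝ (Fin n)), 0] : Fin 2 → _) 0 = 0 := rfl
      exact (iteratedFDeriv ℝ 2 _ x).map_coord_zero 0 h
    rw [h1]
    simp
  · set r := ‖X‖ with hr
    have hrpos : 0 < r := norm_pos_iff.2 hX0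
    set u := r⁻¹ • X with hu
    have hun : ‖u‖ = 1 := by
      rw [hu, norm_smul, norm_inv, norm_norm, ← hr]
      field_simp
    have hXu : X = r • u := by
      rw [hu, smul_smul]
      field_simp
      rw [one_smul]
    have hk := hkey x hx hφx u hun
    have hfX : fderiv ℝ φ x X = r * fderiv ℝ φ x u := by
      conv_lhs => rw [hXu]
      rw [map_smul]; rfl
    have hHX : iteratedFDeriv ℝ 2 φ x ![X, X] = r ^ 2 * iteratedFDeriv ℝ 2 φ x ![u, u] := by
      conv_lhs => rw [hXu]
      exact hess_scale _ _ _
    rw [hess_neg_log hopen hφC2 hφpos hx X, hfX, hHX]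
    set a := fderiv ℝ φ x u with ha
    set b := iteratedFDeriv ℝ 2 φ x ![u, u] with hb
    have hk2 : c₀ * φ x ≤ a ^ 2 - b * φ x := by
      have h := mul_le_mul_of_nonneg_right hk hp.le
      rw [sub_mul, div_mul_cancel₀ _ (ne_of_gt hp)] at h
      linarith
    rw [ge_iff_le, div_le_iff₀ hp]
    have hid : ((φ x ^ 2)⁻¹ * (r * a) ^ 2 - (φ x)⁻¹ * (r ^ 2 * b)) * φ x
        = r ^ 2 * (a ^ 2 - b * φ x) / φ x := by
      field_simp
    rw [hid, le_div_iff₀ hp]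
    nlinarith [mul_le_mul_of_nonneg_left hk2 (sq_nonneg r)]
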